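/- Edge count identity: for every finite simple graph G, tr(|H|²) = 4·|E'|, where |E'| is the number of edges of the connection graph G'. -/

import Mathlib

open Matrix

variable {V : Type*} [Fintype V] [DecidableEq V]

/-- The simplices of the 1-dimensional simplicial complex of a graph: vertices and edges. -/
abbrev Simplex (G : SimpleGraph V) [DecidableRel G.Adj] := V ⊕ G.edgeSet

variable (G : SimpleGraph V) [DecidableRel G.Adj]

/-- The vertex set of a simplex. -/
def sVerts : Simplex G → Set V
  | Sum.inl u => {u}
  | Sum.inr f => {w | w ∈ (f : Sym2 V)}

instance (x : Simplex G) (w : V) : Decidable (w ∈ sVerts G x) :=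
  match x with
  | Sum.inl u => decidable_of_iff (w = u) (by simp [sVerts])
  | Sum.inr f => decidable_of_iff (w ∈ (f : Sym2 V)) (by simp [sVerts])

/-- Two simplices touch if their vertex sets intersect. -/
def touches (x y : Simplex G) : Prop := ∃ w, w ∈ sVerts G x ∧ w ∈ sVerts G y

instance : DecidableRel (touches G) := fun _ _ => Fintype.decidableExistsFintype

/-- The connection Laplacian. -/
def connL : Matrix (Simplex G) (Simplex G) ℤ :=
  Matrix.of fun x y => if touches G x y then 1 else 0

/-- The sign-less incidence matrix. -/
def absd : Matrix (Simplex G) (Simplex G) ℤ :=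
  Matrix.of fun a b =>
    match a, b with
    | Sum.inr f, Sum.inl u => if u ∈ (f : Sym2 V) then 1 else 0
    | _, _ => 0

/-- The sign-less Hodge Laplacian. -/
def absH : Matrix (Simplex G) (Simplex G) ℤ := (absd G + (absd G)ᵀ) ^ 2

/-- The connection graph `G'`: two distinct simplices are adjacent iff their
vertex sets intersect. -/
def connGraph : SimpleGraph (Simplex G) where
  Adj x y := x ≠ y ∧ touches G x y
  symm := by
    constructor
    rintro x y ⟨hxy, w, h1, h2⟩
    exact ⟨Ne.symm hxy, w, h2, h1⟩
  loopless := ⟨fun x h => h.1 rfl⟩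

instance : DecidableRel (connGraph G).Adj :=
  fun x y => inferInstanceAs (Decidable (x ≠ y ∧ touches G x y))


section Aux

open Finset

/-- indicator that vertex `u` is an endpoint of edge `f`. -/
def mm (u : V) (f : G.edgeSet) : ℤ := if u ∈ (f : Sym2 V) then 1 else 0

/-- number of common endpoints of edges `f` and `g`. -/
def II (f g : G.edgeSet) : ℤ := ∑ u : V, mm G u f * mm G u g

lemma mm_sq (u : V) (f : G.edgeSet) : mm G u f * mm G u f = mm G u f := by
  unfold mm; split <;> ring

lemma sum_mm (f : G.edgeSet) : ∑ u : V, mm G u f = 2 := by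
  obtain ⟨s, hs⟩ := f
  induction s using Sym2.ind with
  | _ a b =>
    have hab : a ≠ b := (G.mem_edgeSet.mp hs).ne
    have : ∀ u : V, mm G u ⟨s(a,b), hs⟩
        = (if u = a then (1:ℤ) else 0) + (if u = b then (1:ℤ) else 0) := by
      intro u
      unfold mm
      simp only [Sym2.mem_iff]
      by_cases h1 : u = a <;> by_cases h2 : u = b <;> simp_all
    rw [Finset.sum_congr rfl fun u _ => this u, Finset.sum_add_distrib]
    simp

lemma II_self (f : G.edgeSet) : II G f f = 2 := by
  unfold II
  rw [Finset.sum_congr rfl fun u _ => mm_sq G u f]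
  exact sum_mm G f

lemma touches_inl_inl (u w : V) : touches G (Sum.inl u) (Sum.inl w) ↔ u = w := by
  constructor
  · rintro ⟨x, h1, h2⟩
    simp only [sVerts, Set.mem_singleton_iff] at h1 h2
    exact h1 ▸ h2
  · rintro rfl; exact ⟨u, rfl, rfl⟩

lemma touches_inl_inr (u : V) (f : G.edgeSet) :
    touches G (Sum.inl u) (Sum.inr f) ↔ u ∈ (f : Sym2 V) := by
  constructor
  · rintro ⟨x, h1, h2⟩
    simp only [sVerts, Set.mem_singleton_iff] at h1
    simpa [sVerts, h1] using h2
  · intro h; exact ⟨u, rfl, h⟩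

lemma touches_inr_inl (u : V) (f : G.edgeSet) :
    touches G (Sum.inr f) (Sum.inl u) ↔ u ∈ (f : Sym2 V) := by
  constructor
  · rintro ⟨x, h1, h2⟩
    simp only [sVerts, Set.mem_singleton_iff] at h2
    simpa [sVerts, h2] using h1
  · intro h; exact ⟨u, h, rfl⟩

lemma II_ne (f g : G.edgeSet) (h : f ≠ g) :
    II G f g = if touches G (Sum.inr f) (Sum.inr g) then 1 else 0 := by
  by_cases ht : touches G (Sum.inr f) (Sum.inr g)
  · rw [if_pos ht]
    obtain ⟨w, hwf, hwg⟩ := ht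
    simp only [sVerts, Set.mem_setOf_eq] at hwf hwg
    have key : ∀ u : V, mm G u f * mm G u g = if u = w then (1:ℤ) else 0 := by
      intro u
      unfold mm
      by_cases hu : u = w
      · subst hu; simp [hwf, hwg]
      · by_cases h1 : u ∈ (f : Sym2 V) <;> by_cases h2 : u ∈ (g : Sym2 V) <;>
          simp [h1, h2, hu]
        exfalso
        have hwu : w ≠ u := fun e => hu e.symm
        have hf : (f : Sym2 V) = s(w, u) := (Sym2.mem_and_mem_iff hwu).mp ⟨hwf, h1⟩
        have hg : (g : Sym2 V) = s(w, u) := (Sym2.mem_and_mem_iff hwu).mp ⟨hwg, h2⟩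
        exact h (Subtype.ext (hf.trans hg.symm))
    unfold II
    rw [Finset.sum_congr rfl fun u _ => key u]
    simp
  · have key : ∀ u : V, mm G u f * mm G u g = 0 := by
      intro u
      unfold mm
      by_cases h1 : u ∈ (f : Sym2 V) <;> by_cases h2 : u ∈ (g : Sym2 V) <;>
        simp [h1, h2]
      exact ht ⟨u, by simpa [sVerts] using h1, by simpa [sVerts] using h2⟩
    unfold II
    simp [key, ht]


lemma Aval_ll (u w : V) : (absd G + (absd G)ᵀ) (Sum.inl u) (Sum.inl w) = 0 := rfl

lemma Aval_lr (u : V) (f : G.edgeSet) :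
    (absd G + (absd G)ᵀ) (Sum.inl u) (Sum.inr f) = mm G u f := by
  simp [Matrix.add_apply, Matrix.transpose_apply, absd, mm]

lemma Aval_rl (u : V) (f : G.edgeSet) :
    (absd G + (absd G)ᵀ) (Sum.inr f) (Sum.inl u) = mm G u f := by
  simp [Matrix.add_apply, Matrix.transpose_apply, absd, mm]

lemma Aval_rr (f g : G.edgeSet) : (absd G + (absd G)ᵀ) (Sum.inr f) (Sum.inr g) = 0 := rfl

lemma absH_apply (x y : Simplex G) :
    absH G x y = ∑ z : Simplex G, (absd G + (absd G)ᵀ) x z * (absd G + (absd G)ᵀ) z y := by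
  rw [absH, pow_two, Matrix.mul_apply]

lemma absH_ll (u w : V) :
    absH G (Sum.inl u) (Sum.inl w) = ∑ f : G.edgeSet, mm G u f * mm G w f := by
  rw [absH_apply, Fintype.sum_sum_type]
  simp only [Aval_ll, Aval_lr, Aval_rl, Aval_rr, zero_mul, mul_zero,
    Finset.sum_const_zero, zero_add]

lemma absH_rr (f g : G.edgeSet) :
    absH G (Sum.inr f) (Sum.inr g) = II G f g := by
  rw [absH_apply, Fintype.sum_sum_type, II]
  simp only [Aval_ll, Aval_lr, Aval_rl, Aval_rr, zero_mul, mul_zero,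
    Finset.sum_const_zero, add_zero]

lemma absH_lr (u : V) (g : G.edgeSet) : absH G (Sum.inl u) (Sum.inr g) = 0 := by
  rw [absH_apply, Fintype.sum_sum_type]
  simp only [Aval_ll, Aval_lr, Aval_rl, Aval_rr, zero_mul, mul_zero,
    Finset.sum_const_zero, add_zero]

lemma absH_rl (u : V) (g : G.edgeSet) : absH G (Sum.inr g) (Sum.inl u) = 0 := by
  rw [absH_apply, Fintype.sum_sum_type]
  simp only [Aval_ll, Aval_lr, Aval_rl, Aval_rr, zero_mul, mul_zero,
    Finset.sum_const_zero, add_zero]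

lemma II_comm (f g : G.edgeSet) : II G f g = II G g f :=
  Finset.sum_congr rfl fun u _ => mul_comm _ _

lemma sum4_comm {α β : Type*} [Fintype α] [Fintype β] (h : α → α → β → β → ℤ) :
    (∑ u : α, ∑ w : α, ∑ f : β, ∑ g : β, h u w f g)
      = ∑ f : β, ∑ g : β, ∑ u : α, ∑ w : α, h u w f g := by
  have h1 : ∀ u : α, (∑ w : α, ∑ f : β, ∑ g : β, h u w f g)
      = ∑ f : β, ∑ w : α, ∑ g : β, h u w f g := fun u => Finset.sum_comm
  simp only [h1]
  rw [Finset.sum_comm]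
  refine Finset.sum_congr rfl fun f _ => ?_
  have h2 : ∀ u : α, (∑ w : α, ∑ g : β, h u w f g)
      = ∑ g : β, ∑ w : α, h u w f g := fun u => Finset.sum_comm
  simp only [h2]
  exact Finset.sum_comm

end Aux

/-- Edge count identity: `tr(|H|²) = 4 |E'|`, where `|E'|` is the number of edges of the
connection graph `G'`. -/
theorem trace_eq_four_edges :
    Matrix.trace (absH G ^ 2) = 4 * ((connGraph G).edgeFinset.card : ℤ) := by
  classical
  -- LHS: expand the trace of the square entrywise.
  have LHS : Matrix.trace (absH G ^ 2)
      = ∑ x : Simplex G, ∑ y : Simplex G, absH G x y * absH G y x := by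
    simp [Matrix.trace, pow_two, Matrix.mul_apply, Matrix.diag]
  rw [LHS]
  rw [Fintype.sum_sum_type]
  have split_inner : ∀ x : Simplex G,
      (∑ y : Simplex G, absH G x y * absH G y x)
      = (∑ u : V, absH G x (Sum.inl u) * absH G (Sum.inl u) x)
        + ∑ f : G.edgeSet, absH G x (Sum.inr f) * absH G (Sum.inr f) x := by
    intro x; rw [Fintype.sum_sum_type]
  simp only [split_inner]
  simp only [absH_ll, absH_rr, absH_lr, absH_rl, mul_zero, zero_mul,
    Finset.sum_const_zero, add_zero, zero_add]
  -- now LHS = ∑ u ∑ w (∑f mm u f mm w f)*(∑f mm w f mm u f) + ∑ f ∑ g II f g * II g f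
  -- Fubini: vertex block equals ∑ f ∑ g II f g * II f g
  have fubini : (∑ u : V, ∑ w : V,
        (∑ f : G.edgeSet, mm G u f * mm G w f) * ∑ f : G.edgeSet, mm G w f * mm G u f)
      = ∑ f : G.edgeSet, ∑ g : G.edgeSet, II G f g * II G f g := by
    have expand : ∀ u w : V,
        ((∑ f : G.edgeSet, mm G u f * mm G w f) * ∑ g : G.edgeSet, mm G w g * mm G u g)
        = ∑ f : G.edgeSet, ∑ g : G.edgeSet,
            (mm G u f * mm G u g) * (mm G w f * mm G w g) := by
      intro u w
      rw [Finset.sum_mul_sum]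
      exact Finset.sum_congr rfl fun f _ => Finset.sum_congr rfl fun g _ => by ring
    have expand2 : ∀ f g : G.edgeSet, II G f g * II G f g
        = ∑ u : V, ∑ w : V, (mm G u f * mm G u g) * (mm G w f * mm G w g) := by
      intro f g
      rw [II, Finset.sum_mul_sum]
    simp only [expand, expand2]
    exact sum4_comm _
  have IIcomm : ∀ f g : G.edgeSet, II G f g * II G g f = II G f g * II G f g := by
    intro f g; rw [II_comm G g f]
  simp only [IIcomm]
  rw [fubini]
  set S := ∑ f : G.edgeSet, ∑ g : G.edgeSet, II G f g * II G f g with hS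
  -- compute S
  have PW : ∀ f g : G.edgeSet, II G f g * II G f g
      = (if f = g then (4:ℤ) else 0) + (if f ≠ g then II G f g else 0) := by
    intro f g
    by_cases h : f = g
    · subst h; simp [II_self]
    · simp only [h, if_neg h, Ne, not_false_iff, if_true, zero_add]
      rw [II_ne G f g h]
      split <;> norm_num
  have hScalc : S = (Fintype.card G.edgeSet : ℤ) * 4
      + ∑ f : G.edgeSet, ∑ g : G.edgeSet, (if f ≠ g then II G f g else 0) := by
    rw [hS]
    simp only [PW, Finset.sum_add_distrib]
    congr 1
    simp [Finset.sum_ite_eq, Finset.card_univ, mul_comm]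
  -- RHS: expand the edge count via degrees
  have hdeg := SimpleGraph.sum_degrees_eq_twice_card_edges (connGraph G)
  have hcard : 4 * (((connGraph G).edgeFinset.card : ℤ))
      = 2 * ∑ x : Simplex G, ((connGraph G).degree x : ℤ) := by
    have : (∑ x : Simplex G, ((connGraph G).degree x : ℤ))
        = ((∑ x : Simplex G, (connGraph G).degree x : ℕ) : ℤ) := by push_cast; rfl
    rw [this, hdeg]; push_cast; ring
  rw [hcard]
  have degexp : ∀ x : Simplex G, ((connGraph G).degree x : ℤ)
      = ∑ y : Simplex G, (if (connGraph G).Adj x y then (1:ℤ) else 0) := by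
    intro x
    rw [SimpleGraph.degree, SimpleGraph.neighborFinset_eq_filter, Finset.card_filter]
    push_cast
    exact Finset.sum_congr rfl fun y _ => by split <;> simp
  simp only [degexp]
  rw [Fintype.sum_sum_type]
  have degsplit : ∀ x : Simplex G,
      (∑ y : Simplex G, (if (connGraph G).Adj x y then (1:ℤ) else 0))
      = (∑ u : V, (if (connGraph G).Adj x (Sum.inl u) then (1:ℤ) else 0))
        + ∑ f : G.edgeSet, (if (connGraph G).Adj x (Sum.inr f) then (1:ℤ) else 0) := by
    intro x; rw [Fintype.sum_sum_type]
  simp only [degsplit]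
  have adj_ll : ∀ u w : V,
      (if (connGraph G).Adj (Sum.inl u) (Sum.inl w) then (1:ℤ) else 0) = 0 := by
    intro u w
    rw [if_neg]
    rintro ⟨hne, ht⟩
    exact hne (by rw [(touches_inl_inl G u w).mp ht])
  have adj_lr : ∀ (u : V) (f : G.edgeSet),
      (if (connGraph G).Adj (Sum.inl u) (Sum.inr f) then (1:ℤ) else 0) = mm G u f := by
    intro u f
    have : (connGraph G).Adj (Sum.inl u) (Sum.inr f) ↔ u ∈ (f : Sym2 V) := by
      constructor
      · rintro ⟨-, ht⟩; exact (touches_inl_inr G u f).mp ht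
      · intro h; exact ⟨by simp, (touches_inl_inr G u f).mpr h⟩
    rw [mm]; simp only [this]
  have adj_rl : ∀ (u : V) (f : G.edgeSet),
      (if (connGraph G).Adj (Sum.inr f) (Sum.inl u) then (1:ℤ) else 0) = mm G u f := by
    intro u f
    have : (connGraph G).Adj (Sum.inr f) (Sum.inl u) ↔ u ∈ (f : Sym2 V) := by
      constructor
      · rintro ⟨-, ht⟩; exact (touches_inr_inl G u f).mp ht
      · intro h; exact ⟨by simp, (touches_inr_inl G u f).mpr h⟩
    rw [mm]; simp only [this]
  have adj_rr : ∀ f g : G.edgeSet,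
      (if (connGraph G).Adj (Sum.inr f) (Sum.inr g) then (1:ℤ) else 0)
      = (if f ≠ g then II G f g else 0) := by
    intro f g
    by_cases h : f = g
    · subst h
      simp [SimpleGraph.irrefl]
    · rw [if_pos h, II_ne G f g h]
      have : (connGraph G).Adj (Sum.inr f) (Sum.inr g) ↔ touches G (Sum.inr f) (Sum.inr g) := by
        constructor
        · exact fun h' => h'.2
        · intro ht; exact ⟨fun e => h (by injection e), ht⟩
      simp only [this]
  simp only [adj_ll, adj_lr, adj_rl, adj_rr, Finset.sum_const_zero, zero_add]
  have hswap : (∑ u : V, ∑ f : G.edgeSet, mm G u f)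
      = ∑ f : G.edgeSet, ∑ u : V, mm G u f := Finset.sum_comm
  rw [hswap]
  simp only [sum_mm, Finset.sum_add_distrib, Finset.sum_const, Finset.card_univ,
    nsmul_eq_mul]
  rw [hScalc]
  ring
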